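/- arXiv:1910.03968 — 4 statements merged into one kernel-verified Lean document; each statement's English description precedes it below -/
import Mathlib

section
/- Let V be a real inner product space of finite dimension n ≥ 2, let T : V → V be a self-adjoint linear operator, and let λ1 ≤ λ2 ≤ ⋯ ≤ λn be the eigenvalues of T listed with multiplicity. Let V1 = ker(T − λ1·Id) and V2 = ker(T − λ2·Id). Then a vector v ∈ V belongs to V1 + V2 if and only if there exist orthonormal vectors e1, e2 ∈ V with ⟨T e1, e1⟩ + ⟨T e2, e2⟩ = λ1 + λ2 such that v lies in the span of {e1, e2}. -/
open RealInnerProductSpace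

private lemma memEigKer {V : Type*} [NormedAddCommGroup V] [InnerProductSpace ℝ V]
    (T : V →ₗ[ℝ] V) (c : ℝ) (x : V) :
    x ∈ LinearMap.ker (T - c • LinearMap.id) ↔ T x = c • x := by
  simp [LinearMap.mem_ker, sub_eq_zero]

private lemma orthoPair {V : Type*} [NormedAddCommGroup V] [InnerProductSpace ℝ V]
    (e1 e2 : V) (h1 : ‖e1‖ = 1) (h2 : ‖e2‖ = 1) (h : ⟪e1, e2⟫ = 0) :
    Orthonormal ℝ ![e1, e2] := by
  have h' : ⟪e2, e1⟫ = 0 := by rw [real_inner_comm]; exact h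
  rw [orthonormal_iff_ite]
  intro i j
  fin_cases i <;> fin_cases j <;>
    simp [h, h', real_inner_self_eq_norm_sq, h1, h2]

private lemma rayleighEq {V : Type*} [NormedAddCommGroup V] [InnerProductSpace ℝ V]
    (T : V →ₗ[ℝ] V) (c : ℝ) (x : V) (hx : T x = c • x) (h : ‖x‖ = 1) :
    ⟪T x, x⟫ = c := by
  rw [hx, real_inner_smul_left, real_inner_self_eq_norm_sq, h]; ring

private lemma existsNeZero {V : Type*} [NormedAddCommGroup V] [InnerProductSpace ℝ V]
    [FiniteDimensional ℝ V] (K : Submodule ℝ V) (h : 0 < Module.finrank ℝ K) :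
    ∃ x, x ∈ K ∧ x ≠ 0 := by
  apply Submodule.exists_mem_ne_zero_of_ne_bot
  intro hbot
  rw [hbot] at h
  simp at h

private theorem stmt1_aux {V : Type*} [NormedAddCommGroup V] [InnerProductSpace ℝ V]
    [FiniteDimensional ℝ V]
    {n : ℕ} (hdim : Module.finrank ℝ V = n)
    (T : V →ₗ[ℝ] V) (hT : T.IsSymmetric)
    (lam : Fin n → ℝ) (hmono : Monotone lam)
    (b : OrthonormalBasis (Fin n) ℝ V)
    (heig : ∀ i, T (b i) = lam i • b i)
    (V1 V2 : Submodule ℝ V)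
    (i0 i1 : Fin n) (hi0 : (i0 : ℕ) = 0) (hi1 : (i1 : ℕ) = 1)
    (hV1 : V1 = LinearMap.ker (T - lam i0 • LinearMap.id))
    (hV2 : V2 = LinearMap.ker (T - lam i1 • LinearMap.id))
    (v : V) :
    v ∈ V1 ⊔ V2 ↔
      ∃ e1 e2 : V, ‖e1‖ = 1 ∧ ‖e2‖ = 1 ∧ ⟪e1, e2⟫ = 0 ∧
        ⟪T e1, e1⟫ + ⟪T e2, e2⟫ = lam i0 + lam i1 ∧
        v ∈ Submodule.span ℝ ({e1, e2} : Set V) := by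
  have hm1 : ∀ x : V, x ∈ V1 ↔ T x = lam i0 • x := by
    intro x; rw [hV1]; exact memEigKer T _ x
  have hm2 : ∀ x : V, x ∈ V2 ↔ T x = lam i1 • x := by
    intro x; rw [hV2]; exact memEigKer T _ x
  have hne01 : i0 ≠ i1 := by intro h; rw [Fin.ext_iff, hi0, hi1] at h; omega
  have hle01 : i0 ≤ i1 := by rw [Fin.le_def, hi0, hi1]; omega
  have hl12 : lam i0 ≤ lam i1 := hmono hle01
  have hbn : ∀ i, ‖b i‖ = 1 := fun i => b.orthonormal.1 i
  have hbne : ∀ i, b i ≠ 0 := by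
    intro i h; have := hbn i; rw [h, norm_zero] at this; norm_num at this
  have hb0V1 : b i0 ∈ V1 := (hm1 _).mpr (heig i0)
  have hb1V2 : b i1 ∈ V2 := (hm2 _).mpr (heig i1)
  have hbinner : ⟪b i0, b i1⟫ = 0 := b.orthonormal.2 hne01
  constructor
  · intro hv
    rcases Submodule.mem_sup.mp hv with ⟨v1, hv1, v2, hv2, rfl⟩
    by_cases hll : lam i0 = lam i1
    · -- equal eigenvalues: V1 = V2
      have hmem : v1 + v2 ∈ V1 := by
        refine Submodule.add_mem _ hv1 ?_
        rw [hm1]; rw [hm2] at hv2; rw [hv2, hll]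
      by_cases h0 : v1 + v2 = 0
      · refine ⟨b i0, b i1, hbn i0, hbn i1, hbinner, ?_, ?_⟩
        · rw [rayleighEq T _ _ (heig i0) (hbn i0), rayleighEq T _ _ (heig i1) (hbn i1)]
        · rw [h0]; exact Submodule.zero_mem _
      · set w := v1 + v2 with hw
        set e1 := ‖w‖⁻¹ • w with he1def
        have he1n : ‖e1‖ = 1 := norm_smul_inv_norm h0
        have he1ne : e1 ≠ 0 := by
          intro h; rw [h, norm_zero] at he1n; norm_num at he1n
        have he1V1 : e1 ∈ V1 := Submodule.smul_mem _ _ hmem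
        -- dim V1 ≥ 2
        have hb1V1 : b i1 ∈ V1 := by
          rw [hm1, heig i1, hll]
        have hon2 : Orthonormal ℝ ![b i0, b i1] := orthoPair _ _ (hbn i0) (hbn i1) hbinner
        have hrank2 : 2 ≤ Module.finrank ℝ V1 := by
          have hli := hon2.linearIndependent
          have hsp : Submodule.span ℝ (Set.range ![b i0, b i1]) ≤ V1 := by
            rw [Submodule.span_le]
            rintro x ⟨j, rfl⟩
            fin_cases j
            · exact hb0V1
            · exact hb1V1
          have := finrank_span_eq_card hli
          simp only [Fintype.card_fin] at this
          calc 2 = Module.finrank ℝ (Submodule.span ℝ (Set.range ![b i0, b i1])) :=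
                this.symm
            _ ≤ Module.finrank ℝ V1 := Submodule.finrank_mono hsp
        -- find unit vector in V1 orthogonal to e1
        have horthrank : Module.finrank ℝ ((ℝ ∙ e1)ᗮ) + 1 = n := by
          have h1 := Submodule.finrank_add_finrank_orthogonal (K := (ℝ ∙ e1))
          rw [finrank_span_singleton he1ne, hdim] at h1
          omega
        have hsupinf := Submodule.finrank_sup_add_finrank_inf_eq V1 ((ℝ ∙ e1)ᗮ)
        have hsuple : Module.finrank ℝ ↥(V1 ⊔ (ℝ ∙ e1)ᗮ) ≤ n := by
          rw [← hdim]; exact Submodule.finrank_le _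
        have hpos : 0 < Module.finrank ℝ ↥(V1 ⊓ (ℝ ∙ e1)ᗮ) := by omega
        obtain ⟨u, hu, hune⟩ := existsNeZero _ hpos
        obtain ⟨huV1, huperp⟩ := Submodule.mem_inf.mp hu
        set e2 := ‖u‖⁻¹ • u with he2def
        have he2n : ‖e2‖ = 1 := norm_smul_inv_norm hune
        have he2V1 : e2 ∈ V1 := Submodule.smul_mem _ _ huV1
        refine ⟨e1, e2, he1n, he2n, ?_, ?_, ?_⟩
        · have h0' : ⟪e1, u⟫ = 0 :=
            (Submodule.mem_orthogonal _ u).mp huperp e1 (Submodule.mem_span_singleton_self e1)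
          rw [he2def, real_inner_smul_right, h0', mul_zero]
        · rw [rayleighEq T _ _ ((hm1 e1).mp he1V1) he1n,
            rayleighEq T _ _ ((hm1 e2).mp he2V1) he2n, hll]
        · have : w = ‖w‖ • e1 := by
            rw [he1def, smul_smul, mul_inv_cancel₀ (norm_ne_zero_iff.mpr h0), one_smul]
          rw [this]
          exact Submodule.smul_mem _ _ (Submodule.subset_span (Set.mem_insert _ _))
    · -- distinct eigenvalues
      have horthVV : ∀ x ∈ V1, ∀ y ∈ V2, ⟪x, y⟫ = 0 := by
        intro x hx y hy
        have h1 := hT x y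
        rw [(hm1 x).mp hx, (hm2 y).mp hy, real_inner_smul_left,
          real_inner_smul_right] at h1
        rcases mul_eq_zero.mp (show (lam i0 - lam i1) * ⟪x, y⟫ = 0 by linarith) with h | h
        · exact absurd (by linarith) hll
        · exact h
      have key : ∀ w1 w2 : V, w1 ∈ V1 → w2 ∈ V2 → w1 ≠ 0 → w2 ≠ 0 →
          v1 + v2 ∈ Submodule.span ℝ ({w1, w2} : Set V) →
          ∃ e1 e2 : V, ‖e1‖ = 1 ∧ ‖e2‖ = 1 ∧ ⟪e1, e2⟫ = 0 ∧
            ⟪T e1, e1⟫ + ⟪T e2, e2⟫ = lam i0 + lam i1 ∧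
            v1 + v2 ∈ Submodule.span ℝ ({e1, e2} : Set V) := by
        intro w1 w2 hw1 hw2 hw1n hw2n hsp
        set e1 := ‖w1‖⁻¹ • w1 with he1def
        set e2 := ‖w2‖⁻¹ • w2 with he2def
        have he1V1 : e1 ∈ V1 := Submodule.smul_mem _ _ hw1
        have he2V2 : e2 ∈ V2 := Submodule.smul_mem _ _ hw2
        have he1n : ‖e1‖ = 1 := norm_smul_inv_norm hw1n
        have he2n : ‖e2‖ = 1 := norm_smul_inv_norm hw2n
        refine ⟨e1, e2, he1n, he2n, horthVV _ he1V1 _ he2V2, ?_, ?_⟩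
        · rw [rayleighEq T _ _ ((hm1 e1).mp he1V1) he1n,
            rayleighEq T _ _ ((hm2 e2).mp he2V2) he2n]
        · have hsub : Submodule.span ℝ ({w1, w2} : Set V) ≤
              Submodule.span ℝ ({e1, e2} : Set V) := by
            rw [Submodule.span_le]
            rintro x hx
            rcases hx with h | h
            · rw [h]
              have : w1 = ‖w1‖ • e1 := by
                rw [he1def, smul_smul, mul_inv_cancel₀ (norm_ne_zero_iff.mpr hw1n), one_smul]
              rw [this]
              exact Submodule.smul_mem _ _ (Submodule.subset_span (Set.mem_insert _ _))
            · rw [Set.mem_singleton_iff] at h; rw [h]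
              have : w2 = ‖w2‖ • e2 := by
                rw [he2def, smul_smul, mul_inv_cancel₀ (norm_ne_zero_iff.mpr hw2n), one_smul]
              rw [this]
              exact Submodule.smul_mem _ _
                (Submodule.subset_span (Set.mem_insert_of_mem _ rfl))
          exact hsub hsp
      by_cases h1 : v1 = 0
      · by_cases h2 : v2 = 0
        · exact key (b i0) (b i1) hb0V1 hb1V2 (hbne i0) (hbne i1)
            (by rw [h1, h2, add_zero]; exact Submodule.zero_mem _)
        · refine key (b i0) v2 hb0V1 hv2 (hbne i0) h2 ?_
          rw [h1, zero_add]
          exact Submodule.subset_span (Set.mem_insert_of_mem _ rfl)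
      · by_cases h2 : v2 = 0
        · refine key v1 (b i1) hv1 hb1V2 h1 (hbne i1) ?_
          rw [h2, add_zero]
          exact Submodule.subset_span (Set.mem_insert _ _)
        · refine key v1 v2 hv1 hv2 h1 h2 ?_
          exact Submodule.add_mem _
            (Submodule.subset_span (Set.mem_insert _ _))
            (Submodule.subset_span (Set.mem_insert_of_mem _ rfl))
  · rintro ⟨e1, e2, he1, he2, h12, hsum, hspan⟩
    set a : Fin n → ℝ := fun i => ⟪e1, b i⟫ with ha
    set c : Fin n → ℝ := fun i => ⟪e2, b i⟫ with hc
    have hTx : ∀ x : V, ⟪T x, x⟫ = ∑ i, lam i * (⟪x, b i⟫ * ⟪x, b i⟫) := by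
      intro x
      rw [← b.sum_inner_mul_inner (T x) x]
      refine Finset.sum_congr rfl fun i _ => ?_
      rw [hT x (b i), heig i, real_inner_smul_right, real_inner_comm (b i) x]
      ring
    have hpar : ∀ x : V, ‖x‖ = 1 → ∑ i, ⟪x, b i⟫ * ⟪x, b i⟫ = 1 := by
      intro x hx
      have h := b.sum_inner_mul_inner x x
      rw [real_inner_self_eq_norm_sq, hx, one_pow] at h
      rw [← h]
      refine Finset.sum_congr rfl fun i _ => by rw [real_inner_comm (b i) x]
    have hsa : ∑ i, a i * a i = 1 := hpar e1 he1
    have hsc : ∑ i, c i * c i = 1 := hpar e2 he2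
    have hsl : ∑ i, lam i * (a i * a i) + ∑ i, lam i * (c i * c i) = lam i0 + lam i1 := by
      rw [← hTx e1, ← hTx e2]; exact hsum
    have hbes : ∀ i, a i * a i + c i * c i ≤ 1 := by
      intro i
      have hv := orthoPair e1 e2 he1 he2 h12
      have h := hv.sum_inner_products_le (b i) (s := Finset.univ)
      rw [Fin.sum_univ_two] at h
      simp only [Matrix.cons_val_zero, Matrix.cons_val_one, Matrix.head_cons,
        Real.norm_eq_abs, sq_abs, hbn i, one_pow] at h
      nlinarith [h]
    set g : Fin n → ℝ := fun i => (lam i - lam i1) * (a i * a i + c i * c i) with hg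
    have hgsum : ∑ i, g i = lam i0 - lam i1 := by
      have hge : ∀ i, g i = (lam i * (a i * a i) + lam i * (c i * c i))
          - (lam i1 * (a i * a i) + lam i1 * (c i * c i)) := fun i => by
        simp only [hg]; ring
      calc ∑ i, g i
          = ∑ i, ((lam i * (a i * a i) + lam i * (c i * c i))
              - (lam i1 * (a i * a i) + lam i1 * (c i * c i))) :=
            Finset.sum_congr rfl fun i _ => hge i
        _ = (∑ i, lam i * (a i * a i) + ∑ i, lam i * (c i * c i))
            - (lam i1 * ∑ i, a i * a i + lam i1 * ∑ i, c i * c i) := by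
            rw [Finset.sum_sub_distrib, Finset.sum_add_distrib, Finset.sum_add_distrib,
              Finset.mul_sum, Finset.mul_sum]
        _ = lam i0 - lam i1 := by rw [hsl, hsa, hsc]; ring
    have hgnn : ∀ i ∈ Finset.univ.erase i0, 0 ≤ g i := by
      intro i hi
      have hii : i ≠ i0 := (Finset.mem_erase.mp hi).1
      have hle : lam i1 ≤ lam i := by
        apply hmono
        rw [Fin.le_def, hi1]
        have : (i : ℕ) ≠ 0 := fun h => hii (Fin.ext (by rw [h, hi0]))
        omega
      have hnn : 0 ≤ a i * a i + c i * c i := add_nonneg (mul_self_nonneg _) (mul_self_nonneg _)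
      exact mul_nonneg (by linarith) hnn
    have hsum0 : ∑ i ∈ Finset.univ.erase i0, g i = 0 := by
      have hsplit : g i0 + ∑ i ∈ Finset.univ.erase i0, g i = ∑ i, g i :=
        Finset.add_sum_erase _ _ (Finset.mem_univ i0)
      have hg0 : lam i0 - lam i1 ≤ g i0 := by
        have hb0 := hbes i0
        have hnn : 0 ≤ a i0 * a i0 + c i0 * c i0 := add_nonneg (mul_self_nonneg _) (mul_self_nonneg _)
        have : lam i0 - lam i1 ≤ 0 := by linarith
        simp only [hg]
        nlinarith
      have hge0 : 0 ≤ ∑ i ∈ Finset.univ.erase i0, g i := Finset.sum_nonneg hgnn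
      linarith
    have hkey : ∀ i : Fin n, i ≠ i0 → lam i = lam i1 ∨ (a i = 0 ∧ c i = 0) := by
      intro i hi
      have h0 := (Finset.sum_eq_zero_iff_of_nonneg hgnn).mp hsum0 i
        (Finset.mem_erase.mpr ⟨hi, Finset.mem_univ i⟩)
      simp only [hg] at h0
      rcases mul_eq_zero.mp h0 with h | h
      · left; linarith [sub_eq_zero.mp h]
      · right
        have ha0 : a i * a i = 0 := by linarith [mul_self_nonneg (a i), mul_self_nonneg (c i)]
        have hc0 : c i * c i = 0 := by linarith [mul_self_nonneg (a i), mul_self_nonneg (c i)]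
        exact ⟨mul_self_eq_zero.mp ha0, mul_self_eq_zero.mp hc0⟩
    have hmemE : ∀ x : V, (∀ i : Fin n, i ≠ i0 → lam i = lam i1 ∨ ⟪x, b i⟫ = 0) →
        x ∈ V1 ⊔ V2 := by
      intro x hx
      rw [← b.sum_repr x]
      apply Submodule.sum_mem
      intro i _
      by_cases hi : i = i0
      · subst hi
        exact Submodule.mem_sup_left (Submodule.smul_mem _ _ hb0V1)
      · rcases hx i hi with h | h
        · refine Submodule.mem_sup_right (Submodule.smul_mem _ _ ?_)
          rw [hm2, heig i, h]
        · rw [b.repr_apply_apply, real_inner_comm, h, zero_smul]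
          exact Submodule.zero_mem _
    have hE1 : e1 ∈ V1 ⊔ V2 := hmemE e1 fun i hi => by
      rcases hkey i hi with h | h
      · exact Or.inl h
      · exact Or.inr h.1
    have hE2 : e2 ∈ V1 ⊔ V2 := hmemE e2 fun i hi => by
      rcases hkey i hi with h | h
      · exact Or.inl h
      · exact Or.inr h.2
    have hsub : Submodule.span ℝ ({e1, e2} : Set V) ≤ V1 ⊔ V2 := by
      rw [Submodule.span_le]
      rintro x hx
      rcases hx with h | h
      · rw [h]; exact hE1
      · rw [Set.mem_singleton_iff] at h; rw [h]; exact hE2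
    exact hsub hspan

/-- With `T` self-adjoint on an `n ≥ 2`-dimensional real inner product
space, eigenvalues `lam 0 ≤ lam 1 ≤ ⋯` listed with multiplicity, and
`V1 = ker(T - λ1·Id)`, `V2 = ker(T - λ2·Id)`, a vector `v` lies in `V1 + V2` iff
there are orthonormal `e1, e2` with `⟪T e1, e1⟫ + ⟪T e2, e2⟫ = λ1 + λ2` and
`v ∈ span {e1, e2}`. -/
theorem stmt1 {V : Type*} [NormedAddCommGroup V] [InnerProductSpace ℝ V]
    [FiniteDimensional ℝ V]
    {n : ℕ} (hn : 2 ≤ n) (hdim : Module.finrank ℝ V = n)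
    (T : V →ₗ[ℝ] V) (hT : T.IsSymmetric)
    (lam : Fin n → ℝ) (hmono : Monotone lam)
    (b : OrthonormalBasis (Fin n) ℝ V)
    (heig : ∀ i, T (b i) = lam i • b i)
    (V1 V2 : Submodule ℝ V)
    (hV1 : V1 = LinearMap.ker (T - lam ⟨0, by omega⟩ • LinearMap.id))
    (hV2 : V2 = LinearMap.ker (T - lam ⟨1, by omega⟩ • LinearMap.id))
    (v : V) :
    v ∈ V1 ⊔ V2 ↔
      ∃ e1 e2 : V, ‖e1‖ = 1 ∧ ‖e2‖ = 1 ∧ ⟪e1, e2⟫ = 0 ∧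
        ⟪T e1, e1⟫ + ⟪T e2, e2⟫ = lam ⟨0, by omega⟩ + lam ⟨1, by omega⟩ ∧
        v ∈ Submodule.span ℝ ({e1, e2} : Set V) := by
  exact stmt1_aux hdim T hT lam hmono b heig V1 V2 ⟨0, by omega⟩ ⟨1, by omega⟩
    rfl rfl hV1 hV2 v
end

section
/- Let E be a finite-dimensional real inner product space and let Ω ⊆ E be a nonempty, unbounded convex set. Then there exists a unit vector ω ∈ E with the following two properties: (1) for every x in the closure of Ω and every s ≥ 0, the point x − s ω belongs to the closure of Ω; (2) for every q in the closure of Ω and every ν ∈ E such that ⟨x − q, ν⟩ ≤ 0 for all x ∈ Ω, one has ⟨ν, ω⟩ ≥ 0. -/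
open RealInnerProductSpace Filter

/-- If `Ω` is a nonempty unbounded convex subset of a
finite-dimensional real inner product space, then there is a unit vector `ω` such
that (1) `closure Ω` is invariant under translation by `-s • ω` for all `s ≥ 0`,
and (2) every outward supporting normal `ν` of `Ω` at a closure point `q`
satisfies `⟪ν, ω⟫ ≥ 0`. -/
theorem stmt6 {E : Type*} [NormedAddCommGroup E] [InnerProductSpace ℝ E]
    [FiniteDimensional ℝ E]
    (Ω : Set E) (hne : Ω.Nonempty) (hub : ¬ Bornology.IsBounded Ω)
    (hconv : Convex ℝ Ω) :
    ∃ ω : E, ‖ω‖ = 1 ∧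
      (∀ x ∈ closure Ω, ∀ s : ℝ, 0 ≤ s → x - s • ω ∈ closure Ω) ∧
      (∀ q ∈ closure Ω, ∀ ν : E, (∀ x ∈ Ω, ⟪x - q, ν⟫ ≤ 0) → 0 ≤ ⟪ν, ω⟫) := by
  obtain ⟨x0, hx0⟩ := hne
  -- points going to infinity
  have hseq : ∀ n : ℕ, ∃ y ∈ Ω, (n : ℝ) + ‖x0‖ + 1 < ‖y‖ := by
    intro n
    by_contra h
    push_neg at h
    exact hub (isBounded_iff_forall_norm_le.2 ⟨(n : ℝ) + ‖x0‖ + 1, h⟩)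
  choose x hxΩ hxn using hseq
  set d : ℕ → ℝ := fun n => ‖x n - x0‖ with hd_def
  have hd : ∀ n : ℕ, (n : ℝ) + 1 < d n := by
    intro n
    have : ‖x n‖ - ‖x0‖ ≤ ‖x n - x0‖ := norm_sub_norm_le _ _
    have := hxn n
    simp only [hd_def]
    linarith
  have hdpos : ∀ n, 0 < d n := fun n => lt_of_le_of_lt (by positivity) (hd n)
  set u : ℕ → E := fun n => (d n)⁻¹ • (x n - x0) with hu_def
  have hu : ∀ n, u n ∈ Metric.sphere (0 : E) 1 := by
    intro n
    rw [mem_sphere_zero_iff_norm, hu_def]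
    rw [norm_smul, norm_inv, Real.norm_eq_abs, abs_of_pos (hdpos n)]
    exact inv_mul_cancel₀ (ne_of_gt (hdpos n))
  obtain ⟨ω, hωs, φ, hφ, hlim⟩ := (isCompact_sphere (0 : E) 1).tendsto_subseq hu
  have hωnorm : ‖ω‖ = 1 := mem_sphere_zero_iff_norm.1 hωs
  -- recession from x0
  have key : ∀ t : ℝ, 0 ≤ t → x0 + t • ω ∈ closure Ω := by
    intro t ht
    refine mem_closure_of_tendsto (tendsto_const_nhds.add (hlim.const_smul t)) ?_
    filter_upwards [Filter.eventually_ge_atTop ⌈t⌉₊] with n hn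
    have hnle : (n : ℝ) ≤ φ n := by exact_mod_cast hφ.id_le n
    have htd : t ≤ d (φ n) := by
      have h1 : t ≤ (⌈t⌉₊ : ℝ) := Nat.le_ceil t
      have h2 : ((⌈t⌉₊ : ℕ) : ℝ) ≤ (n : ℝ) := by exact_mod_cast hn
      have := hd (φ n)
      linarith
    set c : ℝ := t / d (φ n) with hc_def
    have hc0 : 0 ≤ c := div_nonneg ht (le_of_lt (hdpos _))
    have hc1 : c ≤ 1 := (div_le_one (hdpos _)).2 htd
    have hmem : c • x (φ n) + (1 - c) • x0 ∈ Ω :=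
      hconv (hxΩ (φ n)) hx0 hc0 (by linarith) (by ring)
    have heq : x0 + t • (u ∘ φ) n = c • x (φ n) + (1 - c) • x0 := by
      simp only [Function.comp_apply, hu_def, smul_smul, hc_def, div_eq_mul_inv]
      module
    rw [heq]
    exact hmem
  -- recession from any closure point
  have hCconv : Convex ℝ (closure Ω) := hconv.closure
  have hrec : ∀ x ∈ closure Ω, ∀ t : ℝ, 0 ≤ t → x + t • ω ∈ closure Ω := by
    intro y hy t ht
    set a : ℕ → ℝ := fun n => 1 / ((n : ℝ) + 1) with ha_def
    have ha : Tendsto a atTop (nhds 0) := tendsto_one_div_add_atTop_nhds_zero_nat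
    have hapos : ∀ n, 0 < a n := fun n => by positivity
    have hale : ∀ n, a n ≤ 1 := by
      intro n
      rw [ha_def]
      rw [div_le_one (by positivity)]
      simp [Nat.cast_nonneg]
    have hmem : ∀ n : ℕ, (1 - a n) • y + a n • x0 + t • ω ∈ closure Ω := by
      intro n
      have h1 : x0 + (((n : ℝ) + 1) * t) • ω ∈ closure Ω :=
        key _ (by positivity)
      have h2 := hCconv hy h1 (by linarith [hapos n, hale n] : (0:ℝ) ≤ 1 - a n)
        (le_of_lt (hapos n)) (by ring)
      have heq : (1 - a n) • y + a n • (x0 + (((n : ℝ) + 1) * t) • ω)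
          = (1 - a n) • y + a n • x0 + t • ω := by
        have hcalc : a n * (((n : ℝ) + 1) * t) = t := by
          rw [ha_def]
          field_simp
        rw [smul_add, smul_smul, hcalc, add_assoc]
      rw [heq] at h2
      exact h2
    have hten : Tendsto (fun n : ℕ => (1 - a n) • y + a n • x0 + t • ω) atTop
        (nhds (y + t • ω)) := by
      have h1 : Tendsto (fun n : ℕ => (1 - a n) • y) atTop (nhds ((1 - (0:ℝ)) • y)) :=
        (tendsto_const_nhds.sub ha).smul_const y
      have h2 : Tendsto (fun n : ℕ => a n • x0) atTop (nhds ((0:ℝ) • x0)) :=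
        ha.smul_const x0
      have := (h1.add h2).add (tendsto_const_nhds (x := t • ω))
      simpa using this
    have := mem_closure_of_tendsto hten (Filter.Eventually.of_forall hmem)
    rwa [closure_closure] at this
  refine ⟨-ω, by simpa using hωnorm, ?_, ?_⟩
  · intro y hy s hs
    have := hrec y hy s hs
    rwa [smul_neg, sub_neg_eq_add]
  · intro q hq ν hν
    have h1 : q + (1 : ℝ) • ω ∈ closure Ω := hrec q hq 1 zero_le_one
    have h2 : closure Ω ⊆ {z : E | ⟪z - q, ν⟫ ≤ 0} := by
      refine closure_minimal hν ?_
      have hcont : Continuous fun z : E => ⟪z - q, ν⟫ :=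
        (continuous_id.sub continuous_const).inner continuous_const
      exact isClosed_le hcont continuous_const
    have h3 : ⟪(q + (1 : ℝ) • ω) - q, ν⟫ ≤ 0 := h2 h1
    have h4 : ⟪ω, ν⟫ ≤ 0 := by simpa using h3
    rw [inner_neg_right, real_inner_comm]
    linarith
end

section
/- Let E be a finite-dimensional real inner product space, a > 0, and let γ : [0, a] → E be a twice continuously differentiable curve parametrized by arc length, i.e. ‖γ'(s)‖ = 1 for all s, with γ(0) = p. Let ν ∈ E be a unit vector with ⟨γ'(0), ν⟩ = 0, and suppose ‖γ''(s)‖ ≤ κ for all s ∈ [0, a], for some κ > 0. If R > 0 satisfies a ≤ R and 2 R κ < 1, then ‖γ(s) − (p − R ν)‖ ≥ R for all s ∈ [0, a]; that is, the curve never enters the open ball of radius R centered at p − R ν. -/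
open RealInnerProductSpace Set

/-- A unit-speed, twice continuously differentiable curve
`γ : [0, a] → E` starting at `p` with `γ'(0) ⊥ ν` and curvature `‖γ''‖ ≤ κ`
never enters the open ball of radius `R` centered at `p - R • ν`, provided
`a ≤ R` and `2 R κ < 1`. -/
theorem stmt8 {E : Type*} [NormedAddCommGroup E] [InnerProductSpace ℝ E]
    [FiniteDimensional ℝ E]
    {a : ℝ} (ha : 0 < a) (γ γ' γ'' : ℝ → E) (p : E)
    (hderiv1 : ∀ s ∈ Icc (0:ℝ) a, HasDerivWithinAt γ (γ' s) (Icc 0 a) s)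
    (hderiv2 : ∀ s ∈ Icc (0:ℝ) a, HasDerivWithinAt γ' (γ'' s) (Icc 0 a) s)
    (hcont : ContinuousOn γ'' (Icc 0 a))
    (hunit : ∀ s ∈ Icc (0:ℝ) a, ‖γ' s‖ = 1)
    (hstart : γ 0 = p)
    (ν : E) (hν : ‖ν‖ = 1) (hperp : ⟪γ' 0, ν⟫ = 0)
    {κ : ℝ} (hκ : 0 < κ) (hcurv : ∀ s ∈ Icc (0:ℝ) a, ‖γ'' s‖ ≤ κ)
    {R : ℝ} (hR : 0 < R) (haR : a ≤ R) (hRκ : 2 * R * κ < 1) :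
    ∀ s ∈ Icc (0:ℝ) a, R ≤ ‖γ s - (p - R • ν)‖ := by
  set q : E := p - R • ν with hq
  have h0mem : (0:ℝ) ∈ Icc (0:ℝ) a := ⟨le_refl 0, le_of_lt ha⟩
  -- the curve moves at most distance s from p
  have hdist : ∀ s ∈ Icc (0:ℝ) a, ‖γ s - p‖ ≤ s := by
    intro s hs
    have := norm_image_sub_le_of_norm_deriv_le_segment' hderiv1
      (fun x hx => le_of_eq (hunit x (Ico_subset_Icc_self hx))) s hs
    simpa [hstart] using this
  have hfar : ∀ s ∈ Icc (0:ℝ) a, ‖γ s - q‖ ≤ 2 * R := by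
    intro s hs
    have h1 : γ s - q = (γ s - p) + R • ν := by rw [hq]; abel
    have h2 : ‖R • ν‖ = R := by
      rw [norm_smul, hν, Real.norm_eq_abs, abs_of_pos hR, mul_one]
    calc ‖γ s - q‖ ≤ ‖γ s - p‖ + ‖R • ν‖ := by rw [h1]; exact norm_add_le _ _
      _ ≤ s + R := by rw [h2]; exact add_le_add_left (hdist s hs) R
      _ ≤ 2 * R := by linarith [hs.2]
  have hsub : ∀ s ∈ Icc (0:ℝ) a,
      HasDerivWithinAt (fun t => γ t - q) (γ' s) (Icc 0 a) s :=
    fun s hs => (hderiv1 s hs).sub_const q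
  -- the first derivative function G of F = ⟪γ - q, γ - q⟫
  set G : ℝ → ℝ := fun s => ⟪γ s - q, γ' s⟫ + ⟪γ' s, γ s - q⟫ with hG
  set G' : ℝ → ℝ := fun s =>
    (⟪γ s - q, γ'' s⟫ + ⟪γ' s, γ' s⟫) + (⟪γ' s, γ' s⟫ + ⟪γ'' s, γ s - q⟫) with hG'
  have hGderiv : ∀ s ∈ Icc (0:ℝ) a, HasDerivWithinAt G (G' s) (Icc 0 a) s := by
    intro s hs
    exact (HasDerivWithinAt.inner ℝ (hsub s hs) (hderiv2 s hs)).add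
      (HasDerivWithinAt.inner ℝ (hderiv2 s hs) (hsub s hs))
  have hG0 : G 0 = 0 := by
    have h0 : γ 0 - q = R • ν := by rw [hstart, hq]; abel
    have hperp' : ⟪ν, γ' 0⟫ = 0 := by rw [real_inner_comm]; exact hperp
    rw [hG]
    simp [h0, real_inner_smul_left, real_inner_smul_right, hperp, hperp']
  -- G' ≥ 0 on Icc
  have hG'nonneg : ∀ s ∈ Icc (0:ℝ) a, 0 ≤ G' s := by
    intro s hs
    have h1 : ⟪γ' s, γ' s⟫ = 1 := by
      rw [real_inner_self_eq_norm_sq, hunit s hs]; norm_num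
    have h2 : |⟪γ'' s, γ s - q⟫| ≤ κ * (2 * R) := by
      calc |⟪γ'' s, γ s - q⟫| ≤ ‖γ'' s‖ * ‖γ s - q‖ := abs_real_inner_le_norm _ _
        _ ≤ κ * (2 * R) := by
            apply mul_le_mul (hcurv s hs) (hfar s hs) (norm_nonneg _) (le_of_lt hκ)
    have h3 : ⟪γ s - q, γ'' s⟫ = ⟪γ'' s, γ s - q⟫ := real_inner_comm _ _
    have h4 := abs_le.mp h2
    rw [hG']
    simp only [h1, h3]
    nlinarith [h4.1]
  -- G is monotone on Icc, hence nonnegative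
  have hGmono : MonotoneOn G (Icc 0 a) := by
    apply monotoneOn_of_hasDerivWithinAt_nonneg (convex_Icc 0 a)
      (fun s hs => (hGderiv s hs).continuousWithinAt)
      (f' := G')
    · intro s hs
      rw [interior_Icc] at hs ⊢
      exact (hGderiv s (Ioo_subset_Icc_self hs)).mono Ioo_subset_Icc_self
    · intro s hs
      rw [interior_Icc] at hs
      exact hG'nonneg s (Ioo_subset_Icc_self hs)
  have hGnonneg : ∀ s ∈ Icc (0:ℝ) a, 0 ≤ G s := by
    intro s hs
    rw [← hG0]
    exact hGmono h0mem hs hs.1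
  -- F = ⟪γ - q, γ - q⟫ is monotone on Icc
  set F : ℝ → ℝ := fun s => ⟪γ s - q, γ s - q⟫ with hF
  have hFderiv : ∀ s ∈ Icc (0:ℝ) a, HasDerivWithinAt F (G s) (Icc 0 a) s :=
    fun s hs => HasDerivWithinAt.inner ℝ (hsub s hs) (hsub s hs)
  have hFmono : MonotoneOn F (Icc 0 a) := by
    apply monotoneOn_of_hasDerivWithinAt_nonneg (convex_Icc 0 a)
      (fun s hs => (hFderiv s hs).continuousWithinAt)
      (f' := G)
    · intro s hs
      rw [interior_Icc] at hs ⊢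
      exact (hFderiv s (Ioo_subset_Icc_self hs)).mono Ioo_subset_Icc_self
    · intro s hs
      rw [interior_Icc] at hs
      exact hGnonneg s (Ioo_subset_Icc_self hs)
  -- conclude
  intro s hs
  have hF0 : F 0 = R ^ 2 := by
    have h0 : γ 0 - q = R • ν := by rw [hstart, hq]; abel
    rw [hF]
    simp only [h0, real_inner_smul_left, real_inner_smul_right,
      real_inner_self_eq_norm_sq]
    rw [norm_smul, hν, Real.norm_eq_abs, abs_of_pos hR, mul_one]
  have hFs : R ^ 2 ≤ F s := by
    rw [← hF0]; exact hFmono h0mem hs hs.1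
  have hFeq : F s = ‖γ s - q‖ ^ 2 := real_inner_self_eq_norm_sq _
  rw [hFeq] at hFs
  nlinarith [norm_nonneg (γ s - q)]
end

section
/- Let E be a finite-dimensional real inner product space, a > 0, and let γ : [0, a] → E be a twice continuously differentiable curve parametrized by arc length with γ(0) = p. Let ν ∈ E be a unit vector with ⟨γ'(0), ν⟩ = 0. Suppose N : [0, a] → E is a differentiable map with ‖N(s)‖ = 1 for all s, N(0) = ν, and ‖N'(s)‖ ≤ C for all s, where a C ≤ 1/2; and suppose γ''(s) = −κ(s) N(s) for all s, where κ : [0, a] → ℝ satisfies κ(s) ≥ c ≥ 0 for all s. Then ⟨γ(s) − p, −ν⟩ ≥ (c/4) s² for all s ∈ [0, a]. -/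
open RealInnerProductSpace Set

/-- Height estimate: a unit-speed, twice continuously differentiable
curve `γ : [0, a] → E` starting at `p`, with `γ'(0) ⊥ ν`, with a unit "normal"
field `N` satisfying `N 0 = ν`, `‖N'‖ ≤ C`, `a C ≤ 1/2`, and `γ'' = -κ • N` with
`κ ≥ c ≥ 0`, satisfies `⟪γ(s) - p, -ν⟫ ≥ (c/4) s²` for all `s ∈ [0, a]`. -/
theorem stmt9 {E : Type*} [NormedAddCommGroup E] [InnerProductSpace ℝ E]
    [FiniteDimensional ℝ E]
    {a : ℝ} (ha : 0 < a) (γ γ' γ'' : ℝ → E) (p : E)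
    (hderiv1 : ∀ s ∈ Icc (0:ℝ) a, HasDerivWithinAt γ (γ' s) (Icc 0 a) s)
    (hderiv2 : ∀ s ∈ Icc (0:ℝ) a, HasDerivWithinAt γ' (γ'' s) (Icc 0 a) s)
    (hcont : ContinuousOn γ'' (Icc 0 a))
    (hunit : ∀ s ∈ Icc (0:ℝ) a, ‖γ' s‖ = 1)
    (hstart : γ 0 = p)
    (ν : E) (hν : ‖ν‖ = 1) (hperp : ⟪γ' 0, ν⟫ = 0)
    (N N' : ℝ → E)
    (hN : ∀ s ∈ Icc (0:ℝ) a, HasDerivWithinAt N (N' s) (Icc 0 a) s)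
    (hNunit : ∀ s ∈ Icc (0:ℝ) a, ‖N s‖ = 1) (hN0 : N 0 = ν)
    {C : ℝ} (hNder : ∀ s ∈ Icc (0:ℝ) a, ‖N' s‖ ≤ C) (haC : a * C ≤ 1 / 2)
    (κ : ℝ → ℝ) (hγ'' : ∀ s ∈ Icc (0:ℝ) a, γ'' s = -(κ s) • N s)
    {c : ℝ} (hc : 0 ≤ c) (hκ : ∀ s ∈ Icc (0:ℝ) a, c ≤ κ s) :
    ∀ s ∈ Icc (0:ℝ) a, c / 4 * s ^ 2 ≤ ⟪γ s - p, -ν⟫ := by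

  have h0D : (0:ℝ) ∈ Icc (0:ℝ) a := ⟨le_refl 0, ha.le⟩
  have hC : 0 ≤ C := le_trans (norm_nonneg _) (hNder 0 h0D)
  -- N is C-Lipschitz from 0, so ⟪N s, ν⟫ ≥ 1 - C s ≥ 1/2
  have hNν : ∀ s ∈ Icc (0:ℝ) a, (1:ℝ)/2 ≤ ⟪N s, ν⟫ := by
    intro s hs
    have hlip : ‖N s - N 0‖ ≤ C * ‖s - 0‖ :=
      (convex_Icc 0 a).norm_image_sub_le_of_norm_hasDerivWithin_le hN hNder h0D hs
    rw [hN0, sub_zero, Real.norm_eq_abs, abs_of_nonneg hs.1] at hlip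
    have hCs : C * s ≤ 1/2 := by
      calc C * s ≤ C * a := by nlinarith [hs.2]
        _ ≤ 1/2 := by linarith [haC]
    have hinner : |⟪N s - ν, ν⟫| ≤ ‖N s - ν‖ * ‖ν‖ := abs_real_inner_le_norm _ _
    have hνν : ⟪ν, ν⟫ = 1 := by
      have := real_inner_self_eq_norm_sq ν
      rw [hν] at this; simpa using this
    have : ⟪N s, ν⟫ = ⟪ν, ν⟫ + ⟪N s - ν, ν⟫ := by
      rw [inner_sub_left]; ring
    rw [this, hνν]
    have := abs_le.1 hinner
    nlinarith [this.1, hlip]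
  -- second derivative of the height is ≥ c/2
  have hsnd : ∀ s ∈ Icc (0:ℝ) a, c / 2 ≤ ⟪γ'' s, -ν⟫ := by
    intro s hs
    have : ⟪γ'' s, -ν⟫ = κ s * ⟪N s, ν⟫ := by
      rw [hγ'' s hs, inner_neg_right, inner_smul_left]
      simp
    rw [this]
    have h1 := hNν s hs
    have h2 := hκ s hs
    nlinarith
  -- f2 s = ⟪γ' s, -ν⟫ - c/2 * s  is monotone on Icc 0 a, and f2 0 = 0
  set f2 : ℝ → ℝ := fun s => ⟪γ' s, -ν⟫ - c / 2 * s with hf2def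
  have hf2deriv : ∀ s ∈ Icc (0:ℝ) a,
      HasDerivWithinAt f2 (⟪γ'' s, -ν⟫ - c / 2) (Icc 0 a) s := by
    intro s hs
    have h1 : HasDerivWithinAt (fun t => ⟪γ' t, -ν⟫) (⟪γ'' s, -ν⟫) (Icc 0 a) s := by
      have := (hderiv2 s hs).inner ℝ (hasDerivWithinAt_const s (Icc (0:ℝ) a) (-ν))
      simpa using this
    have h2 : HasDerivWithinAt (fun t => c / 2 * t) (c / 2) (Icc 0 a) s := by
      simpa using (hasDerivWithinAt_id s (Icc (0:ℝ) a)).const_mul (c/2)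
    exact h1.sub h2
  have hf2mono : MonotoneOn f2 (Icc 0 a) := by
    apply monotoneOn_of_hasDerivWithinAt_nonneg (convex_Icc 0 a)
      (fun s hs => (hf2deriv s hs).continuousWithinAt)
      (fun s hs => ((hf2deriv s (interior_subset hs)).mono interior_subset))
    intro s hs
    have := hsnd s (interior_subset hs)
    linarith
  have hf20 : f2 0 = 0 := by
    simp [hf2def, inner_neg_right, hperp]
  have hf2nonneg : ∀ s ∈ Icc (0:ℝ) a, 0 ≤ f2 s := by
    intro s hs
    have := hf2mono h0D hs hs.1
    rw [hf20] at this; exact this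
  -- f1 s = ⟪γ s - p, -ν⟫ - c/4 * s^2 is monotone on Icc 0 a, and f1 0 = 0
  set f1 : ℝ → ℝ := fun s => ⟪γ s - p, -ν⟫ - c / 4 * s ^ 2 with hf1def
  have hf1deriv : ∀ s ∈ Icc (0:ℝ) a, HasDerivWithinAt f1 (f2 s) (Icc 0 a) s := by
    intro s hs
    have h1 : HasDerivWithinAt (fun t => ⟪γ t - p, -ν⟫) (⟪γ' s, -ν⟫) (Icc 0 a) s := by
      have := ((hderiv1 s hs).sub_const p).inner ℝ
        (hasDerivWithinAt_const s (Icc (0:ℝ) a) (-ν))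
      simpa using this
    have h2 : HasDerivWithinAt (fun t => c / 4 * t ^ 2) (c / 2 * s) (Icc 0 a) s := by
      have := ((hasDerivAt_pow 2 s).const_mul (c/4)).hasDerivWithinAt (s := Icc (0:ℝ) a)
      exact this.congr_deriv (by ring)
    exact h1.sub h2
  have hf1mono : MonotoneOn f1 (Icc 0 a) := by
    apply monotoneOn_of_hasDerivWithinAt_nonneg (convex_Icc 0 a)
      (fun s hs => (hf1deriv s hs).continuousWithinAt)
      (fun s hs => ((hf1deriv s (interior_subset hs)).mono interior_subset))
    intro s hs
    exact hf2nonneg s (interior_subset hs)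
  have hf10 : f1 0 = 0 := by
    simp [hf1def, hstart]
  intro s hs
  have := hf1mono h0D hs hs.1
  rw [hf10] at this
  simp only [hf1def] at this
  linarith
end
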